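/- Let d₁, d₂ ≥ 1 with d₁·d₂ ≥ 2, and let v be a unit vector in ℂ^{d₁} ⊗ ℂ^{d₂}. Equip the unitary group U(d₁d₂) with its Haar probability measure, and let Tr₂ denote the partial trace over the second factor ℂ^{d₂}. Then ∫_{U(d₁d₂)} Tr[ ( Tr₂( U vv* U* ) )² ] dU = (d₁ + d₂)/(d₁·d₂ + 1). -/

import Mathlib

open MeasureTheory Matrix
open scoped ComplexConjugate

/-- Partial trace over the second factor of a complex matrix indexed by `Fin d₁ × Fin d₂`. -/
noncomputable def ptrace2 {d₁ d₂ : ℕ}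
    (M : Matrix (Fin d₁ × Fin d₂) (Fin d₁ × Fin d₂) ℂ) :
    Matrix (Fin d₁) (Fin d₁) ℂ :=
  Matrix.of fun i i' => ∑ j : Fin d₂, M (i, j) (i', j)

namespace Stmt12Aux
variable {n : Type*} [Fintype n] [DecidableEq n]

/-- The rotated vector `U v`. -/
noncomputable def wv (v : n → ℂ) (U : Matrix.unitaryGroup n ℂ) (a : n) : ℂ :=
  ∑ p, (U : Matrix n n ℂ) a p * v p

lemma continuous_wv (v : n → ℂ) (a : n) : Continuous (fun U => wv v U a) := by
  apply continuous_finset_sum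
  intro p _
  exact (((continuous_subtype_val.matrix_elem a p)).mul
    continuous_const)

lemma norm_wv_le (v : n → ℂ) (U : Matrix.unitaryGroup n ℂ) (a : n) :
    ‖wv v U a‖ ≤ ∑ p, ‖v p‖ := by
  refine (norm_sum_le _ _).trans (Finset.sum_le_sum fun p _ => ?_)
  rw [norm_mul]
  calc ‖(U : Matrix n n ℂ) a p‖ * ‖v p‖ ≤ 1 * ‖v p‖ := by
        gcongr
        exact entry_norm_bound_of_unitary U.2 a p
    _ = ‖v p‖ := one_mul _

/-- Degree-(2,2) monomial in the entries of `U v`. -/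
noncomputable def mon (v : n → ℂ) (a b c d : n) (U : Matrix.unitaryGroup n ℂ) : ℂ :=
  wv v U a * conj (wv v U b) * (wv v U c * conj (wv v U d))

lemma continuous_mon (v : n → ℂ) (a b c d : n) : Continuous (mon v a b c d) := by
  unfold mon
  exact ((continuous_wv v a).mul ((Complex.continuous_conj).comp (continuous_wv v b))).mul
    (((continuous_wv v c).mul ((Complex.continuous_conj).comp (continuous_wv v d))))

/-- Diagonal phase. -/
noncomputable def phaseMat (k : n) : Matrix n n ℂ :=
  Matrix.diagonal (fun x => if x = k then Complex.I else 1)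

lemma phaseMat_mem (k : n) : phaseMat k ∈ Matrix.unitaryGroup n ℂ := by
  rw [Matrix.mem_unitaryGroup_iff']
  rw [phaseMat, Matrix.star_eq_conjTranspose, Matrix.diagonal_conjTranspose,
    Matrix.diagonal_mul_diagonal]
  have : ∀ x : n, (star fun x => if x = k then Complex.I else 1) x *
      (if x = k then Complex.I else 1) = 1 := by
    intro x
    by_cases h : x = k <;>
      simp [h, Pi.star_apply, Complex.star_def, Complex.conj_I, Complex.I_mul_I]
  simp only [this]
  exact Matrix.diagonal_one

/-- Permutation matrix. -/
def permMat (σ : Equiv.Perm n) : Matrix n n ℂ :=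
  Matrix.of fun x y => if x = σ y then 1 else 0

lemma permMat_mem (σ : Equiv.Perm n) : permMat σ ∈ Matrix.unitaryGroup n ℂ := by
  rw [Matrix.mem_unitaryGroup_iff']
  ext x y
  simp only [Matrix.mul_apply, Matrix.star_apply, permMat, Matrix.of_apply, Matrix.one_apply]
  rw [Finset.sum_eq_single (σ x)]
  · have : (σ x = σ y) = (x = y) := by
      simp [Equiv.apply_eq_iff_eq]
    simp [this]
  · intro z _ hz
    rw [if_neg hz]
    simp
  · simp

lemma permMat_mul_apply (σ : Equiv.Perm n) (M : Matrix n n ℂ) (x p : n) :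
    (permMat σ * M) x p = M (σ⁻¹ x) p := by
  simp only [Matrix.mul_apply, permMat, Matrix.of_apply]
  rw [Finset.sum_eq_single (σ⁻¹ x)]
  · simp
  · intro z _ hz
    rw [if_neg, zero_mul]
    intro h
    exact hz (by simp [h])
  · simp

lemma phaseMat_mul_apply (k : n) (M : Matrix n n ℂ) (x p : n) :
    (phaseMat k * M) x p = (if x = k then Complex.I else 1) * M x p := by
  simp [phaseMat, Matrix.diagonal_mul]


/-- `(√2)⁻¹` as a complex number. -/
noncomputable def rr : ℂ := ((Real.sqrt 2 : ℝ) : ℂ)⁻¹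

lemma rr_conj : conj rr = rr := by
  rw [rr, ← Complex.ofReal_inv, Complex.conj_ofReal]

lemma rr_sq : rr * rr = 2⁻¹ := by
  rw [rr, ← mul_inv, ← Complex.ofReal_mul, Real.mul_self_sqrt (by norm_num)]
  norm_num

/-- A real 2×2 Hadamard rotation embedded at coordinates `a b`. -/
noncomputable def hadMat (a b : n) : Matrix n n ℂ := Matrix.of fun x y =>
  if x = a then (if y = a then rr else if y = b then rr else 0)
  else if x = b then (if y = a then rr else if y = b then -rr else 0)
  else if y = x then 1 else 0

lemma hadMat_mem {a b : n} (hab : a ≠ b) : hadMat a b ∈ Matrix.unitaryGroup n ℂ := by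
  have h2 : rr * rr = 2⁻¹ := rr_sq
  rw [Matrix.mem_unitaryGroup_iff]
  ext x y
  simp only [Matrix.mul_apply, Matrix.star_eq_conjTranspose, Matrix.conjTranspose_apply,
    Matrix.one_apply]
  have hsupp : ∀ w z : n, w = a ∨ w = b → z ∉ ({a, b} : Finset n) →
      (hadMat a b w z : ℂ) = 0 := by
    intro w z hw hz
    simp only [Finset.mem_insert, Finset.mem_singleton, not_or] at hz
    rcases hw with hw | hw <;> simp [hadMat, hw, hab, hz.1, hz.2, Ne.symm hab]
  by_cases hx : x = a ∨ x = b
  · by_cases hy : y = a ∨ y = b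
    · -- both rows supported on {a, b}
      rw [← Finset.sum_subset (Finset.subset_univ ({a, b} : Finset n))
        (fun z _ hz => by rw [hsupp x z hx hz, zero_mul])]
      rw [Finset.sum_pair hab]
      rcases hx with hx | hx <;> rcases hy with hy | hy <;>
        simp [hadMat, hx, hy, hab, Ne.symm hab, rr_conj, map_neg] <;>
        linear_combination (2:ℂ) * h2
    · push_neg at hy
      rw [Finset.sum_eq_zero, if_neg]
      · rintro rfl
        rcases hx with hx | hx <;> exact (by simp [hx] at hy : False)
      · intro z _
        by_cases hz : z ∈ ({a, b} : Finset n)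
        · have : (hadMat a b y z : ℂ) = 0 := by
            simp only [Finset.mem_insert, Finset.mem_singleton] at hz
            rcases hz with hz | hz <;>
              simp [hadMat, hz, hy.1, hy.2, Ne.symm hy.1, Ne.symm hy.2, hab, Ne.symm hab]
          rw [this]
          simp
        · rw [hsupp x z hx hz, zero_mul]
  · push_neg at hx
    -- row x is the delta at x
    rw [Finset.sum_eq_single x]
    · have hxx : (hadMat a b x x : ℂ) = 1 := by simp [hadMat, hx.1, hx.2]
      rw [hxx, one_mul]
      by_cases hxy : x = y
      · subst hxy; simp [hxx]
      · rw [if_neg hxy]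
        have : (hadMat a b y x : ℂ) = 0 := by
          by_cases hy : y = a
          · simp [hadMat, hy, hx.1, hx.2, Ne.symm hx.1, Ne.symm hx.2, hab, Ne.symm hab]
          · by_cases hy' : y = b
            · simp [hadMat, hy', hy, hx.1, hx.2, Ne.symm hx.1, Ne.symm hx.2, hab, Ne.symm hab]
            · simp [hadMat, hy, hy', hxy]
        simp [this]
    · intro z _ hz
      have : (hadMat a b x z : ℂ) = 0 := by
        simp [hadMat, hx.1, hx.2, hz, Ne.symm hz]
      rw [this, zero_mul]
    · simp

lemma hadMat_mul_apply {a b : n} (hab : a ≠ b) (M : Matrix n n ℂ) (x p : n) :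
    (hadMat a b * M) x p =
      if x = a then rr * (M a p + M b p)
      else if x = b then rr * (M a p - M b p)
      else M x p := by
  simp only [Matrix.mul_apply]
  by_cases hx : x = a
  · rw [if_pos hx, ← Finset.sum_subset (Finset.subset_univ ({a, b} : Finset n))
      (fun z _ hz => by
        simp only [Finset.mem_insert, Finset.mem_singleton, not_or] at hz
        simp [hadMat, hx, hz.1, hz.2]),
      Finset.sum_pair hab]
    simp [hadMat, hx, hab, Ne.symm hab]
    ring
  · by_cases hx' : x = b
    · rw [if_neg hx, if_pos hx', ← Finset.sum_subset (Finset.subset_univ ({a, b} : Finset n))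
        (fun z _ hz => by
          simp only [Finset.mem_insert, Finset.mem_singleton, not_or] at hz
          simp [hadMat, hx, hx', hz.1, hz.2]),
        Finset.sum_pair hab]
      simp [hadMat, hx, hx', hab, Ne.symm hab]
      ring
    · rw [if_neg hx, if_neg hx', Finset.sum_eq_single x]
      · simp [hadMat, hx, hx']
      · intro z _ hz
        simp [hadMat, hx, hx', hz, Ne.symm hz]
      · simp

section Meas
variable [MeasurableSpace (Matrix.unitaryGroup n ℂ)] [BorelSpace (Matrix.unitaryGroup n ℂ)]
variable (v : n → ℂ) (μ : Measure (Matrix.unitaryGroup n ℂ)) [μ.IsHaarMeasure]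
  [IsProbabilityMeasure μ]

lemma integrable_mon (a b c d : n) : Integrable (mon v a b c d) μ := by
  set C : ℝ := ∑ p, ‖v p‖ with hC
  refine Integrable.mono' (integrable_const (C * C * (C * C)))
    (continuous_mon v a b c d).aestronglyMeasurable ?_
  filter_upwards with U
  have h0 : (0:ℝ) ≤ C := Finset.sum_nonneg fun p _ => norm_nonneg _
  have h := norm_wv_le v U
  simp only [mon, norm_mul, RCLike.norm_conj]
  gcongr <;> exact h _

/-- Second moment. -/
noncomputable def Tq (a b c d : n) : ℂ :=
  ∫ U, mon v a b c d U ∂μ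

lemma Tq_inv (a b c d : n) (V : Matrix.unitaryGroup n ℂ) :
    ∫ U, mon v a b c d (V * U) ∂μ = Tq v μ a b c d :=
  integral_mul_left_eq_self (mon v a b c d) V

lemma wv_phase (k : n) (U : Matrix.unitaryGroup n ℂ) (x : n) :
    wv v ((⟨phaseMat k, phaseMat_mem k⟩ : Matrix.unitaryGroup n ℂ) * U) x
      = (if x = k then Complex.I else 1) * wv v U x := by
  simp only [wv, Matrix.UnitaryGroup.mul_val, phaseMat_mul_apply, Finset.mul_sum, mul_assoc]

lemma wv_perm (σ : Equiv.Perm n) (U : Matrix.unitaryGroup n ℂ) (x : n) :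
    wv v ((⟨permMat σ, permMat_mem σ⟩ : Matrix.unitaryGroup n ℂ) * U) x
      = wv v U (σ⁻¹ x) := by
  simp only [wv, Matrix.UnitaryGroup.mul_val, permMat_mul_apply]

lemma Tq_phase (k a b c d : n) :
    Tq v μ a b c d =
      ((if a = k then Complex.I else 1) * conj (if b = k then Complex.I else 1) *
        ((if c = k then Complex.I else 1) * conj (if d = k then Complex.I else 1))) *
      Tq v μ a b c d := by
  have h1 : ∀ U, mon v a b c d ((⟨phaseMat k, phaseMat_mem k⟩ : Matrix.unitaryGroup n ℂ) * U) =
      ((if a = k then Complex.I else 1) * conj (if b = k then Complex.I else 1) *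
        ((if c = k then Complex.I else 1) * conj (if d = k then Complex.I else 1))) *
      mon v a b c d U := by
    intro U
    simp only [mon, wv_phase, RingHom.map_mul]
    ring
  conv_lhs => rw [← Tq_inv v μ a b c d ⟨phaseMat k, phaseMat_mem k⟩]
  simp only [h1]
  rw [integral_const_mul]
  rfl

lemma Tq_perm (σ : Equiv.Perm n) (a b c d : n) :
    Tq v μ (σ a) (σ b) (σ c) (σ d) = Tq v μ a b c d := by
  have h1 : ∀ U, mon v (σ a) (σ b) (σ c) (σ d)
      ((⟨permMat σ, permMat_mem σ⟩ : Matrix.unitaryGroup n ℂ) * U) = mon v a b c d U := by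
    intro U
    simp only [mon, wv_perm, Equiv.Perm.inv_def, Equiv.symm_apply_apply]
  rw [← Tq_inv v μ (σ a) (σ b) (σ c) (σ d) ⟨permMat σ, permMat_mem σ⟩]
  simp only [h1, Tq]

/-- Vanishing when the scalar in `Tq_phase` is not 1. -/
lemma Tq_zero_of_phase (k a b c d : n)
    (h : ((if a = k then Complex.I else 1) * conj (if b = k then Complex.I else 1) *
        ((if c = k then Complex.I else 1) * conj (if d = k then Complex.I else 1))) ≠ 1) :
    Tq v μ a b c d = 0 := by
  have h2 := Tq_phase v μ k a b c d
  by_contra hT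
  apply h
  have h3 : (1 - ((if a = k then Complex.I else 1) * conj (if b = k then Complex.I else 1) *
      ((if c = k then Complex.I else 1) * conj (if d = k then Complex.I else 1)))) *
      Tq v μ a b c d = 0 := by
    rw [sub_mul, one_mul, ← h2, sub_self]
  rcases mul_eq_zero.mp h3 with h4 | h4
  · have := sub_eq_zero.mp h4
    exact this.symm
  · exact absurd h4 hT

lemma wv_had {a b : n} (hab : a ≠ b) (U : Matrix.unitaryGroup n ℂ) (x : n) :
    wv v ((⟨hadMat a b, hadMat_mem hab⟩ : Matrix.unitaryGroup n ℂ) * U) x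
      = if x = a then rr * (wv v U a + wv v U b)
        else if x = b then rr * (wv v U a - wv v U b)
        else wv v U x := by
  simp only [wv, Matrix.UnitaryGroup.mul_val, hadMat_mul_apply hab]
  by_cases hx : x = a
  · rw [if_pos hx]
    rw [Finset.sum_congr rfl (fun p (_ : p ∈ Finset.univ) => by rw [if_pos hx])]
    simp only [Finset.mul_sum, ← Finset.sum_add_distrib]
    exact Finset.sum_congr rfl fun p _ => by ring
  · rw [if_neg hx]
    by_cases hx' : x = b
    · rw [if_pos hx']
      rw [Finset.sum_congr rfl (fun p (_ : p ∈ Finset.univ) => by rw [if_neg hx, if_pos hx'])]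
      simp only [Finset.mul_sum, ← Finset.sum_sub_distrib]
      exact Finset.sum_congr rfl fun p _ => by ring
    · rw [if_neg hx']
      exact Finset.sum_congr rfl fun p _ => by rw [if_neg hx, if_neg hx']

/-- index function for the 16-term expansion -/
def eab (a b : n) : Bool → n := fun t => if t then b else a

/-- The Hadamard expansion identity: `p = 2 q`. -/
lemma Tq_had {a b : n} (hab : a ≠ b) :
    Tq v μ a a a a = (4:ℂ)⁻¹ * ∑ t : Bool × Bool × Bool × Bool,
      Tq v μ (eab a b t.1) (eab a b t.2.1) (eab a b t.2.2.1) (eab a b t.2.2.2) := by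
  have key : ∀ U, mon v a a a a
      ((⟨hadMat a b, hadMat_mem hab⟩ : Matrix.unitaryGroup n ℂ) * U)
      = (4:ℂ)⁻¹ * ∑ t : Bool × Bool × Bool × Bool,
        mon v (eab a b t.1) (eab a b t.2.1) (eab a b t.2.2.1) (eab a b t.2.2.2) U := by
    intro U
    simp only [mon, wv_had v hab, eq_self_iff_true, if_true, Fintype.sum_prod_type,
      Fintype.sum_bool, eab, Bool.false_eq_true, if_false, _root_.map_mul, _root_.map_add,
      rr_conj]
    linear_combination (((rr * rr + 2⁻¹) *
      ((wv v U a + wv v U b) * (conj (wv v U a) + conj (wv v U b)) *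
        ((wv v U a + wv v U b) * (conj (wv v U a) + conj (wv v U b))))) ) * rr_sq
  rw [← Tq_inv v μ a a a a ⟨hadMat a b, hadMat_mem hab⟩]
  simp only [key]
  rw [integral_const_mul]
  congr 1
  rw [integral_finset_sum]
  · rfl
  · exact fun t _ => integrable_mon v μ _ _ _ _

lemma Tq_swap13 (a b c d : n) : Tq v μ a b c d = Tq v μ c b a d := by
  unfold Tq
  congr 1
  funext U
  simp only [mon]
  ring

lemma Tq_swap24 (a b c d : n) : Tq v μ a b c d = Tq v μ a d c b := by
  unfold Tq
  congr 1
  funext U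
  simp only [mon]
  ring

lemma I_ne_one : (Complex.I : ℂ) ≠ 1 := by
  intro h
  have := congrArg Complex.im h
  simp at this

lemma neg_I_ne_one : (-Complex.I : ℂ) ≠ 1 := by
  intro h
  have := congrArg Complex.im h
  simp at this

lemma neg_one_ne_one : (-1 : ℂ) ≠ 1 := by norm_num

/-- `Tq a b c d = 0` whenever `a` differs from `b`, `c`, `d`. -/
lemma Tq_zero_of_ne (a b c d : n) (h1 : b ≠ a) (h2 : c ≠ a) (h3 : d ≠ a) :
    Tq v μ a b c d = 0 := by
  apply Tq_zero_of_phase v μ a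
  rw [if_pos rfl, if_neg h1, if_neg h2, if_neg h3]
  simp only [RingHom.map_one, mul_one, one_mul]
  exact I_ne_one

lemma Tq_perm_diag (x y : n) : Tq v μ x x x x = Tq v μ y y y y := by
  have h := Tq_perm v μ (Equiv.swap y x) y y y y
  rwa [Equiv.swap_apply_left] at h

lemma Tq_offdiag_eq (a b x z : n) (hab : a ≠ b) (hxz : x ≠ z) :
    Tq v μ x x z z = Tq v μ a a b b := by
  set τ := Equiv.swap a x with hτ
  set σ := τ.trans (Equiv.swap (τ b) z) with hσ
  have hτa : τ a = x := Equiv.swap_apply_left a x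
  have hτb_ne : τ b ≠ x := by
    rw [← hτa]
    exact fun h => hab.symm (τ.injective h)
  have h1 : σ a = x := by
    rw [hσ, Equiv.trans_apply, hτa, Equiv.swap_apply_of_ne_of_ne (Ne.symm hτb_ne) hxz]
  have h2 : σ b = z := by
    rw [hσ, Equiv.trans_apply, Equiv.swap_apply_left]
  have h := Tq_perm v μ σ a a b b
  rw [h1, h2] at h
  exact h

lemma wv_norm (hv : dotProduct (star v) v = 1) (U : Matrix.unitaryGroup n ℂ) :
    ∑ x, wv v U x * conj (wv v U x) = 1 := by
  have hw : wv v U = (U : Matrix n n ℂ).mulVec v := by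
    funext x
    simp [wv, Matrix.mulVec, dotProduct]
  rw [hw]
  have : ∑ x, (U : Matrix n n ℂ).mulVec v x * conj ((U : Matrix n n ℂ).mulVec v x)
      = dotProduct (star ((U : Matrix n n ℂ).mulVec v)) ((U : Matrix n n ℂ).mulVec v) := by
    simp only [dotProduct, Pi.star_apply, Complex.star_def]
    exact Finset.sum_congr rfl fun x _ => by ring
  rw [this, Matrix.star_mulVec, dotProduct_mulVec, Matrix.vecMul_vecMul]
  have hU : (U : Matrix n n ℂ)ᴴ * (U : Matrix n n ℂ) = 1 := by
    rw [← Matrix.star_eq_conjTranspose]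
    exact U.2.1
  rw [hU, Matrix.vecMul_one]
  exact hv

lemma Tq_normalization (hv : dotProduct (star v) v = 1) :
    ∑ x : n, ∑ z : n, Tq v μ x x z z = 1 := by
  have h1 : ∀ x : n, ∑ z : n, Tq v μ x x z z = ∫ U, ∑ z : n, mon v x x z z U ∂μ := by
    intro x
    rw [integral_finset_sum _ fun z _ => integrable_mon v μ x x z z]
    rfl
  simp only [h1]
  rw [← integral_finset_sum]
  · have h2 : ∀ U : Matrix.unitaryGroup n ℂ,
        ∑ x : n, ∑ z : n, mon v x x z z U = 1 := by
      intro U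
      have : ∑ x : n, ∑ z : n, mon v x x z z U
          = (∑ x, wv v U x * conj (wv v U x)) * (∑ z, wv v U z * conj (wv v U z)) := by
        rw [Finset.sum_mul_sum]
        exact Finset.sum_congr rfl fun x _ => Finset.sum_congr rfl fun z _ => rfl
      rw [this, wv_norm v hv U, one_mul]
    simp only [h2]
    simp
  · exact fun x _ => (integrable_finset_sum _ fun z _ => integrable_mon v μ _ _ _ _)

/-- Hadamard rotation relation: the diagonal moment is twice the off-diagonal one. -/
lemma Tq_double {a b : n} (hab : a ≠ b) : Tq v μ a a a a = 2 * Tq v μ a a b b := by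
  set q := Tq v μ a a b b with hq
  have h := Tq_had v μ hab
  rw [Fintype.sum_prod_type] at h
  simp only [Fintype.sum_prod_type, Fintype.sum_bool, eab, if_true, Bool.false_eq_true,
    if_false] at h
  -- evaluate all 16 terms
  have e1 : Tq v μ b b b b = Tq v μ a a a a := Tq_perm_diag v μ b a
  have e2 : Tq v μ a a b b = Tq v μ a a b b := rfl
  have e3 : Tq v μ b b a a = q := by
    have := Tq_perm v μ (Equiv.swap a b) a a b b
    rw [Equiv.swap_apply_left, Equiv.swap_apply_right] at this
    exact this
  have e4 : Tq v μ a b b a = q := by rw [Tq_swap13]; exact e3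
  have e5 : Tq v μ b a a b = q := by rw [Tq_swap13 v μ b a a b]
  have z1 : Tq v μ a b a b = 0 := by
    apply Tq_zero_of_phase v μ a
    rw [if_pos rfl, if_neg (Ne.symm hab)]
    simp only [RingHom.map_one, mul_one, one_mul, Complex.conj_I, neg_mul_neg,
      Complex.I_mul_I]
    norm_num [Complex.ext_iff]
  have z2 : Tq v μ b a b a = 0 := by
    apply Tq_zero_of_phase v μ a
    rw [if_pos rfl, if_neg (Ne.symm hab)]
    simp only [RingHom.map_one, mul_one, one_mul, Complex.conj_I, neg_mul_neg,
      Complex.I_mul_I]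
    norm_num [Complex.ext_iff]
  have z3 : Tq v μ a a a b = 0 := by
    apply Tq_zero_of_phase v μ b
    rw [if_pos rfl, if_neg (hab)]
    simp only [RingHom.map_one, mul_one, one_mul, Complex.conj_I, neg_mul_neg,
      Complex.I_mul_I]
    norm_num [Complex.ext_iff]
  have z4 : Tq v μ a a b a = 0 := by
    apply Tq_zero_of_phase v μ b
    rw [if_pos rfl, if_neg (hab)]
    simp only [RingHom.map_one, mul_one, one_mul, Complex.conj_I, neg_mul_neg,
      Complex.I_mul_I]
    norm_num [Complex.ext_iff]
  have z5 : Tq v μ a b a a = 0 := by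
    apply Tq_zero_of_phase v μ b
    rw [if_pos rfl, if_neg (hab)]
    simp only [RingHom.map_one, mul_one, one_mul, Complex.conj_I, neg_mul_neg,
      Complex.I_mul_I]
    norm_num [Complex.ext_iff]
  have z6 : Tq v μ b a a a = 0 := by
    apply Tq_zero_of_phase v μ b
    rw [if_pos rfl, if_neg (hab)]
    simp only [RingHom.map_one, mul_one, one_mul, Complex.conj_I, neg_mul_neg,
      Complex.I_mul_I]
    norm_num [Complex.ext_iff]
  have z7 : Tq v μ b b b a = 0 := by
    apply Tq_zero_of_phase v μ a
    rw [if_pos rfl, if_neg (Ne.symm hab)]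
    simp only [RingHom.map_one, mul_one, one_mul, Complex.conj_I, neg_mul_neg,
      Complex.I_mul_I]
    norm_num [Complex.ext_iff]
  have z8 : Tq v μ b b a b = 0 := by
    apply Tq_zero_of_phase v μ a
    rw [if_pos rfl, if_neg (Ne.symm hab)]
    simp only [RingHom.map_one, mul_one, one_mul, Complex.conj_I, neg_mul_neg,
      Complex.I_mul_I]
    norm_num [Complex.ext_iff]
  have z9 : Tq v μ b a b b = 0 := by
    apply Tq_zero_of_phase v μ a
    rw [if_pos rfl, if_neg (Ne.symm hab)]
    simp only [RingHom.map_one, mul_one, one_mul, Complex.conj_I, neg_mul_neg,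
      Complex.I_mul_I]
    norm_num [Complex.ext_iff]
  have z10 : Tq v μ a b b b = 0 := by
    apply Tq_zero_of_phase v μ a
    rw [if_pos rfl, if_neg (Ne.symm hab)]
    simp only [RingHom.map_one, mul_one, one_mul, Complex.conj_I, neg_mul_neg,
      Complex.I_mul_I]
    norm_num [Complex.ext_iff]
  rw [e1, e3, e4, e5, z1, z2, z3, z4, z5, z6, z7, z8, z9, z10] at h
  rw [← hq] at h
  linear_combination 2 * h

/-- Value of the off-diagonal second moment. -/
lemma Tq_offdiag_val (hv : dotProduct (star v) v = 1) {a b : n} (hab : a ≠ b) :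
    Tq v μ a a b b = ((Fintype.card n : ℂ) * ((Fintype.card n : ℂ) + 1))⁻¹ := by
  set q := Tq v μ a a b b with hq
  have hp2q : Tq v μ a a a a = 2 * q := Tq_double v μ hab
  -- normalization gives q * (N * (N + 1)) = 1
  have hN2 : 2 ≤ Fintype.card n := Fintype.one_lt_card_iff_nontrivial.mpr ⟨a, b, hab⟩
  have hsum : ∑ x : n, ∑ z : n, Tq v μ x x z z
      = (Fintype.card n : ℂ) * ((Fintype.card n : ℂ) + 1) * q := by
    have hx : ∀ x : n, ∑ z : n, Tq v μ x x z z = ((Fintype.card n : ℂ) + 1) * q := by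
      intro x
      rw [← Finset.add_sum_erase _ _ (Finset.mem_univ x)]
      have hdiag : Tq v μ x x x x = 2 * q := by
        rw [Tq_perm_diag v μ x a]; exact hp2q
      have hrest : ∑ z ∈ Finset.univ.erase x, Tq v μ x x z z
          = ((Fintype.card n : ℂ) - 1) * q := by
        rw [Finset.sum_congr rfl (fun z hz => by
          exact Tq_offdiag_eq v μ a b x z hab (Ne.symm (Finset.mem_erase.mp hz).1))]
        rw [Finset.sum_const, Finset.card_erase_of_mem (Finset.mem_univ x), Finset.card_univ]
        rw [nsmul_eq_mul]
        push_cast [Nat.cast_sub (le_trans one_le_two hN2)]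
        ring
      rw [hdiag, hrest]
      ring
    simp only [hx]
    rw [Finset.sum_const, Finset.card_univ, nsmul_eq_mul]
    ring
  rw [Tq_normalization v μ hv] at hsum
  exact eq_inv_of_mul_eq_one_right (by linear_combination -hsum)

lemma Tq_diag_val (hv : dotProduct (star v) v = 1) (hcard : 1 < Fintype.card n) (x : n) :
    Tq v μ x x x x
      = 2 * ((Fintype.card n : ℂ) * ((Fintype.card n : ℂ) + 1))⁻¹ := by
  obtain ⟨b, hb⟩ := Fintype.exists_ne_of_one_lt_card hcard x
  have hxb : x ≠ b := Ne.symm hb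
  rw [Tq_double v μ hxb, Tq_offdiag_val v μ hv hxb]

lemma rho_apply (U : Matrix.unitaryGroup n ℂ) (x y : n) :
    ((U : Matrix n n ℂ) * Matrix.vecMulVec v (star v) * ((U : Matrix n n ℂ))ᴴ) x y
      = wv v U x * conj (wv v U y) := by
  simp only [Matrix.mul_apply, Matrix.vecMulVec_apply, Matrix.conjTranspose_apply, wv,
    Pi.star_apply, Complex.star_def, map_sum, _root_.map_mul, Finset.sum_mul, Finset.mul_sum]
  refine Finset.sum_congr rfl fun p _ => Finset.sum_congr rfl fun p' _ => ?_
  ring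

end Meas
end Stmt12Aux

open Stmt12Aux

/-- Lubkin's formula / the quantum instance of the paper's Page-scenario computation:
the Haar-averaged purity of the reduced state of a random pure bipartite state. -/
theorem stmt12 (d₁ d₂ : ℕ) (hd₁ : 1 ≤ d₁) (hd₂ : 1 ≤ d₂) (hd : 2 ≤ d₁ * d₂)
    (v : Fin d₁ × Fin d₂ → ℂ) (hv : dotProduct (star v) v = 1)
    [MeasurableSpace (Matrix.unitaryGroup (Fin d₁ × Fin d₂) ℂ)]
    [BorelSpace (Matrix.unitaryGroup (Fin d₁ × Fin d₂) ℂ)]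
    (μ : Measure (Matrix.unitaryGroup (Fin d₁ × Fin d₂) ℂ))
    [μ.IsHaarMeasure] [IsProbabilityMeasure μ] :
    ∫ U, (ptrace2 ((U : Matrix (Fin d₁ × Fin d₂) (Fin d₁ × Fin d₂) ℂ) *
              Matrix.vecMulVec v (star v) *
              ((U : Matrix (Fin d₁ × Fin d₂) (Fin d₁ × Fin d₂) ℂ))ᴴ) *
          ptrace2 ((U : Matrix (Fin d₁ × Fin d₂) (Fin d₁ × Fin d₂) ℂ) *
              Matrix.vecMulVec v (star v) *
              ((U : Matrix (Fin d₁ × Fin d₂) (Fin d₁ × Fin d₂) ℂ))ᴴ)).trace ∂μ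
      = ((d₁ : ℂ) + (d₂ : ℂ)) / ((d₁ : ℂ) * (d₂ : ℂ) + 1) := by
  classical
  have hcard : Fintype.card (Fin d₁ × Fin d₂) = d₁ * d₂ := by
    simp [Fintype.card_prod]
  have hcard2 : 2 ≤ Fintype.card (Fin d₁ × Fin d₂) := by rw [hcard]; exact hd
  set N : ℂ := (Fintype.card (Fin d₁ × Fin d₂) : ℂ) with hN
  set q : ℂ := (N * (N + 1))⁻¹ with hqdef
  -- pointwise expansion of the integrand
  have hpoint : ∀ U : Matrix.unitaryGroup (Fin d₁ × Fin d₂) ℂ,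
      (ptrace2 ((U : Matrix (Fin d₁ × Fin d₂) (Fin d₁ × Fin d₂) ℂ) * Matrix.vecMulVec v (star v) * ((U : Matrix (Fin d₁ × Fin d₂) (Fin d₁ × Fin d₂) ℂ))ᴴ) *
        ptrace2 ((U : Matrix (Fin d₁ × Fin d₂) (Fin d₁ × Fin d₂) ℂ) * Matrix.vecMulVec v (star v) *
          ((U : Matrix (Fin d₁ × Fin d₂) (Fin d₁ × Fin d₂) ℂ))ᴴ)).trace
      = ∑ i : Fin d₁, ∑ i' : Fin d₁, ∑ j : Fin d₂, ∑ j' : Fin d₂,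
          mon v (i, j) (i', j) (i', j') (i, j') U := by
    intro U
    rw [Matrix.trace]
    simp only [Matrix.diag_apply, Matrix.mul_apply, ptrace2, Matrix.of_apply,
      rho_apply v U]
    refine Finset.sum_congr rfl fun i _ => Finset.sum_congr rfl fun i' _ => ?_
    rw [Finset.sum_mul_sum]
    exact Finset.sum_congr rfl fun j _ => Finset.sum_congr rfl fun j' _ => rfl
  -- integrate term by term
  have hint : ∫ U, (ptrace2 ((U : Matrix (Fin d₁ × Fin d₂) (Fin d₁ × Fin d₂) ℂ) * Matrix.vecMulVec v (star v) *
        ((U : Matrix (Fin d₁ × Fin d₂) (Fin d₁ × Fin d₂) ℂ))ᴴ) *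
      ptrace2 ((U : Matrix (Fin d₁ × Fin d₂) (Fin d₁ × Fin d₂) ℂ) * Matrix.vecMulVec v (star v) *
        ((U : Matrix (Fin d₁ × Fin d₂) (Fin d₁ × Fin d₂) ℂ))ᴴ)).trace ∂μ
      = ∑ i : Fin d₁, ∑ i' : Fin d₁, ∑ j : Fin d₂, ∑ j' : Fin d₂,
          Tq v μ (i, j) (i', j) (i', j') (i, j') := by
    rw [integral_congr_ae (Filter.Eventually.of_forall hpoint)]
    rw [integral_finset_sum _ fun i _ => (integrable_finset_sum _ fun i' _ =>
      integrable_finset_sum _ fun j _ => integrable_finset_sum _ fun j' _ =>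
        integrable_mon v μ _ _ _ _)]
    refine Finset.sum_congr rfl fun i _ => ?_
    rw [integral_finset_sum _ fun i' _ => (integrable_finset_sum _ fun j _ =>
      integrable_finset_sum _ fun j' _ => integrable_mon v μ _ _ _ _)]
    refine Finset.sum_congr rfl fun i' _ => ?_
    rw [integral_finset_sum _ fun j _ =>
      (integrable_finset_sum _ fun j' _ => integrable_mon v μ _ _ _ _)]
    refine Finset.sum_congr rfl fun j _ => ?_
    rw [integral_finset_sum _ fun j' _ => integrable_mon v μ _ _ _ _]
    rfl
  -- evaluate each second moment
  have hterm : ∀ (i i' : Fin d₁) (j j' : Fin d₂),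
      Tq v μ (i, j) (i', j) (i', j') (i, j')
        = (if i = i' then q else 0) + (if j = j' then q else 0) := by
    intro i i' j j'
    by_cases hii : i = i'
    · by_cases hjj : j = j'
      · subst hii; subst hjj
        rw [if_pos rfl, if_pos rfl]
        rw [Tq_diag_val v μ hv (by omega) (i, j)]
        rw [hqdef, hN]
        ring
      · subst hii
        rw [if_pos rfl, if_neg hjj]
        have hne : (i, j) ≠ (i, j') := fun h => hjj (congrArg Prod.snd h)
        rw [Tq_offdiag_val v μ hv hne, hqdef, hN]
        ring
    · by_cases hjj : j = j'
      · subst hjj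
        rw [if_neg hii, if_pos rfl]
        have hne : (i, j) ≠ (i', j) := fun h => hii (congrArg Prod.fst h)
        rw [Tq_swap13 v μ (i, j) (i', j) (i', j) (i, j)]
        rw [Tq_offdiag_val v μ hv (Ne.symm hne), hqdef, hN]
        ring
      · rw [if_neg hii, if_neg hjj]
        have h1 : ((i', j) : Fin d₁ × Fin d₂) ≠ (i, j) := fun h => hii (congrArg Prod.fst h).symm
        have h2 : ((i', j') : Fin d₁ × Fin d₂) ≠ (i, j) := fun h => hii (congrArg Prod.fst h).symm
        have h3 : ((i, j') : Fin d₁ × Fin d₂) ≠ (i, j) := fun h => hjj (congrArg Prod.snd h).symm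
        rw [Tq_zero_of_ne v μ _ _ _ _ h1 h2 h3, add_zero]
  -- sum it all up
  rw [hint]
  simp only [hterm, Finset.sum_add_distrib, Finset.sum_ite_eq, Finset.sum_const,
    Finset.mem_univ, if_pos, Finset.card_univ, Fintype.card_fin, nsmul_eq_mul,
    Finset.sum_ite_eq', mul_ite, mul_zero]
  -- now pure arithmetic
  have hq' : q = ((d₁ : ℂ) * d₂ * ((d₁ : ℂ) * d₂ + 1))⁻¹ := by
    rw [hqdef, hN, hcard]
    push_cast
    ring_nf
  have hd₁0 : (d₁ : ℂ) ≠ 0 := Nat.cast_ne_zero.mpr (by omega)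
  have hd₂0 : (d₂ : ℂ) ≠ 0 := Nat.cast_ne_zero.mpr (by omega)
  have hdd1 : (d₁ : ℂ) * d₂ + 1 ≠ 0 := by
    have : ((d₁ * d₂ + 1 : ℕ) : ℂ) ≠ 0 := Nat.cast_ne_zero.mpr (Nat.succ_ne_zero _)
    push_cast at this
    exact this
  rw [hq']
  field_simp
  ring
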